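/- If the energy–momentum endomorphism Q is positive semidefinite (i.e. ⟨λ, Qλ⟩ ≥ 0 for every λ ∈ ℂ⁴), then 3·E₀² ≥ L², i.e. E₀² ≥ (|c|² + |c'|² + |J|²)/3. -/

import Mathlib

open Matrix Complex ComplexOrder

/-- The energy–momentum endomorphism `Q` of an asymptotically anti-de Sitter
initial data set, as a 4×4 complex matrix. -/
noncomputable def QMatrix (E₀ c₁ c₂ c₃ c₁' c₂' c₃' J₁ J₂ J₃ : ℝ) :
    Matrix (Fin 4) (Fin 4) ℂ :=
  let w₁ : ℂ := (c₃' : ℂ) - I * J₃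
  let w₂p : ℂ := -(c₁' : ℂ) + (J₂ : ℂ) + I * ((c₂' : ℂ) + J₁)
  let w₂m : ℂ := -(c₁' : ℂ) - (J₂ : ℂ) - I * ((c₂' : ℂ) - J₁)
  !![(E₀ : ℂ) - c₃, (c₁ : ℂ) - I * c₂, w₁, w₂p;
     (c₁ : ℂ) + I * c₂, (E₀ : ℂ) + c₃, w₂m, -w₁;
     starRingEnd ℂ w₁, starRingEnd ℂ w₂m, (E₀ : ℂ) + c₃, -(c₁ : ℂ) + I * c₂;
     starRingEnd ℂ w₂p, -(starRingEnd ℂ w₁), -(c₁ : ℂ) - I * c₂, (E₀ : ℂ) - c₃]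

lemma aux_discrim {A B C : ℝ} (hA : 0 ≤ A) (hC : 0 ≤ C) (hB : 0 ≤ B)
    (h : ∀ s : ℝ, 0 ≤ C * B * (s * s) + 2 * B * s + A) : B ≤ A * C := by
  have hd := discrim_le_zero h
  rw [discrim] at hd
  rcases hB.eq_or_lt with h0 | h0
  · rw [← h0]; exact mul_nonneg hA hC
  · nlinarith


set_option maxHeartbeats 2000000 in
/-- If the energy–momentum endomorphism `Q` is positive semidefinite, then
`3·E₀² ≥ L²`, i.e. `E₀² ≥ (|c|² + |c'|² + |J|²)/3`. -/
theorem E0_sq_ge_L_sq_div_three_of_posSemidef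
    (E₀ c₁ c₂ c₃ c₁' c₂' c₃' J₁ J₂ J₃ L : ℝ)
    (hL0 : 0 ≤ L)
    (hL : L ^ 2 = ![c₁, c₂, c₃] ⬝ᵥ ![c₁, c₂, c₃]
      + ![c₁', c₂', c₃'] ⬝ᵥ ![c₁', c₂', c₃'] + ![J₁, J₂, J₃] ⬝ᵥ ![J₁, J₂, J₃])
    (hQ : (QMatrix E₀ c₁ c₂ c₃ c₁' c₂' c₃' J₁ J₂ J₃).PosSemidef) :
    E₀ ^ 2 ≥ (![c₁, c₂, c₃] ⬝ᵥ ![c₁, c₂, c₃]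
      + ![c₁', c₂', c₃'] ⬝ᵥ ![c₁', c₂', c₃'] + ![J₁, J₂, J₃] ⬝ᵥ ![J₁, J₂, J₃]) / 3 := by
    -- diagonal nonnegativity
  have hd0 : 0 ≤ E₀ - c₃ := by
    have h := hQ.dotProduct_mulVec_nonneg ![1, 0, 0, 0]
    rw [Complex.le_def] at h
    have h1 := h.1
    simp [QMatrix, mulVec, dotProduct, Fin.sum_univ_four, Complex.add_re, Complex.mul_re,
      Complex.mul_im, Complex.add_im, Complex.sub_re, Complex.sub_im] at h1
    linarith
  have hd1 : 0 ≤ E₀ + c₃ := by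
    have h := hQ.dotProduct_mulVec_nonneg ![0, 1, 0, 0]
    rw [Complex.le_def] at h
    have h1 := h.1
    simp [QMatrix, mulVec, dotProduct, Fin.sum_univ_four, Complex.add_re, Complex.mul_re,
      Complex.mul_im, Complex.add_im, Complex.sub_re, Complex.sub_im] at h1
    linarith
  have k12 : c₁ ^ 2 + c₂ ^ 2 ≤ (E₀ - c₃) * (E₀ + c₃) := by
    refine aux_discrim hd0 hd1 (by positivity) fun s => ?_
    have h := hQ.dotProduct_mulVec_nonneg ![1, (s : ℂ) * ((c₁ : ℂ) + I * c₂), 0, 0]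
    rw [Complex.le_def] at h
    have h1 := h.1
    simp [QMatrix, mulVec, dotProduct, Fin.sum_univ_four, Complex.add_re, Complex.mul_re,
      Complex.mul_im, Complex.add_im, Complex.sub_re, Complex.sub_im] at h1
    nlinarith [h1]
  have k13 : c₃' ^ 2 + J₃ ^ 2 ≤ (E₀ - c₃) * (E₀ + c₃) := by
    refine aux_discrim hd0 hd1 (by positivity) fun s => ?_
    have h := hQ.dotProduct_mulVec_nonneg ![1, 0, (s : ℂ) * ((c₃' : ℂ) + I * J₃), 0]
    rw [Complex.le_def] at h
    have h1 := h.1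
    simp [QMatrix, mulVec, dotProduct, Fin.sum_univ_four, Complex.add_re, Complex.mul_re,
      Complex.mul_im, Complex.add_im, Complex.sub_re, Complex.sub_im] at h1
    nlinarith [h1]
  have k14 : (J₂ - c₁') ^ 2 + (c₂' + J₁) ^ 2 ≤ (E₀ - c₃) * (E₀ - c₃) := by
    refine aux_discrim hd0 hd0 (by positivity) fun s => ?_
    have h := hQ.dotProduct_mulVec_nonneg ![1, 0, 0, (s : ℂ) * (-(c₁' : ℂ) + (J₂ : ℂ) - I * ((c₂' : ℂ) + J₁))]
    rw [Complex.le_def] at h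
    have h1 := h.1
    simp [QMatrix, mulVec, dotProduct, Fin.sum_univ_four, Complex.add_re, Complex.mul_re,
      Complex.mul_im, Complex.add_im, Complex.sub_re, Complex.sub_im] at h1
    nlinarith [h1]
  have k23 : (c₁' + J₂) ^ 2 + (c₂' - J₁) ^ 2 ≤ (E₀ + c₃) * (E₀ + c₃) := by
    refine aux_discrim hd1 hd1 (by positivity) fun s => ?_
    have h := hQ.dotProduct_mulVec_nonneg ![0, 1, (s : ℂ) * (-(c₁' : ℂ) - (J₂ : ℂ) + I * ((c₂' : ℂ) - J₁)), 0]
    rw [Complex.le_def] at h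
    have h1 := h.1
    simp [QMatrix, mulVec, dotProduct, Fin.sum_univ_four, Complex.add_re, Complex.mul_re,
      Complex.mul_im, Complex.add_im, Complex.sub_re, Complex.sub_im] at h1
    nlinarith [h1]
  simp only [dotProduct, Fin.sum_univ_three, Matrix.cons_val_zero, Matrix.cons_val_one,
    Matrix.head_cons, Matrix.cons_val_two, Matrix.tail_cons]
  nlinarith [k12, k13, k14, k23, sq_nonneg c₃]
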